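/- Let K be a field of characteristic zero, r ≥ 1, m ≥ 1, and a_1, …, a_m ∈ M_r(K). Let M be the block companion matrix of g(u) = u^m + a_1 u^{m-1} + ⋯ + a_m and set c_p := Tr(M^p) ∈ M_r(K) (naive block trace) for p ≥ 1. Let G(z) = 1 + a_1 z + ⋯ + a_m z^m ∈ M_r(K)[[z]]. Then one has the identity of formal power series with matrix coefficients: −(c_1 + c_2 z + c_3 z^2 + ⋯)·G(z) = G'(z) = a_1 + 2a_2 z + ⋯ + m a_m z^{m-1} in M_r(K)[[z]]. -/

import Mathlib

/-- The block companion matrix of the monic polynomial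
`g(u) = u^m + a 1 * u^(m-1) + ⋯ + a m` with coefficients in `M_r(K)`:
`M_{i+1,i} = 1` for `1 ≤ i ≤ m-1` (1-based), `M_{i,m} = -a (m+1-i)`, other entries `0`. -/
def blockCompanion {K : Type*} [Field K] (r m : ℕ) (a : ℕ → Matrix (Fin r) (Fin r) K) :
    Matrix (Fin m) (Fin m) (Matrix (Fin r) (Fin r) K) :=
  Matrix.of fun i j =>
    if (j : ℕ) + 1 = m then -a (m - (i : ℕ))
    else if (i : ℕ) = (j : ℕ) + 1 then 1 else 0

namespace BCAux

open PowerSeries Finset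

variable {K : Type*} [Field K] (r m : ℕ) (a : ℕ → Matrix (Fin r) (Fin r) K)

local notation "R" => Matrix (Fin r) (Fin r) K

/-- Entry-wise generating series of powers of the block companion matrix. -/
noncomputable def N (i j : Fin m) : PowerSeries R :=
  PowerSeries.mk fun p => (blockCompanion r m a ^ p) i j

lemma coeff_N (i j : Fin m) (p : ℕ) :
    (PowerSeries.coeff p) (N r m a i j) = (blockCompanion r m a ^ p) i j := by
  simp [N]

/-- P1 : shift along non-last columns. -/
lemma N_eq_of_lt (i : Fin m) (j : Fin m) (hj : (j : ℕ) + 1 < m) :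
    N r m a i j = (if i = j then 1 else 0)
      + X * N r m a i ⟨(j : ℕ) + 1, hj⟩ := by
  apply PowerSeries.ext; intro p
  cases p with
  | zero =>
      simp only [coeff_N, pow_zero, map_add, coeff_zero_X_mul, add_zero]
      by_cases h : i = j <;> simp [h, Matrix.one_apply]
  | succ p =>
      rw [coeff_N, map_add, coeff_succ_X_mul, coeff_N, pow_succ, Matrix.mul_apply]
      have hij : (PowerSeries.coeff (p+1)) (if i = j then (1 : PowerSeries R) else 0) = 0 := by
        by_cases h : i = j <;> simp [h, PowerSeries.coeff_one]
      rw [hij, zero_add]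
      rw [Finset.sum_eq_single (⟨(j : ℕ) + 1, hj⟩ : Fin m)]
      · simp [blockCompanion, Nat.ne_of_lt hj]
      · intro k _ hk
        have : blockCompanion r m a k j = 0 := by
          simp only [blockCompanion, Matrix.of_apply]
          rw [if_neg (Nat.ne_of_lt hj), if_neg]
          intro h
          exact hk (Fin.ext h)
        rw [this, mul_zero]
      · intro h; exact absurd (Finset.mem_univ _) h

/-- P2 : last column. -/
lemma N_eq_last (i : Fin m) (j : Fin m) (hj : (j : ℕ) + 1 = m) :
    N r m a i j = (if i = j then 1 else 0)
      - X * ∑ k : Fin m, N r m a i k * PowerSeries.C (a (m - (k : ℕ))) := by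
  apply PowerSeries.ext; intro p
  cases p with
  | zero =>
      simp only [coeff_N, pow_zero, map_sub, coeff_zero_X_mul, sub_zero]
      by_cases h : i = j <;> simp [h, Matrix.one_apply]
  | succ p =>
      rw [coeff_N, map_sub, coeff_succ_X_mul, pow_succ, Matrix.mul_apply]
      have hij : (PowerSeries.coeff (p+1)) (if i = j then (1 : PowerSeries R) else 0) = 0 := by
        by_cases h : i = j <;> simp [h, PowerSeries.coeff_one]
      rw [hij, zero_sub, map_sum, ← Finset.sum_neg_distrib]
      apply Finset.sum_congr rfl
      intro k _
      have hM : blockCompanion r m a k j = -a (m - (k : ℕ)) := by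
        simp [blockCompanion, hj]
      rw [hM, coeff_mul_C, coeff_N, mul_neg]

end BCAux

namespace BCAux2
open PowerSeries Finset BCAux

variable {K : Type*} [Field K] (r m : ℕ) (a : ℕ → Matrix (Fin r) (Fin r) K)

local notation "R" => Matrix (Fin r) (Fin r) K

lemma N_solve_aux (i : Fin m) : ∀ (t : ℕ) (k : Fin m), (k : ℕ) + t + 1 = m →
    N r m a i k = X ^ (m - 1 - (k : ℕ)) * N r m a i ⟨m - 1, by have := k.isLt; omega⟩
      + (if (k : ℕ) ≤ (i : ℕ) ∧ (i : ℕ) + 1 < m then X ^ ((i : ℕ) - (k : ℕ)) else 0) := by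
  intro t
  induction t with
  | zero =>
      intro k hk
      have hk' : (k : ℕ) = m - 1 := by omega
      have hkeq : k = ⟨m - 1, by omega⟩ := Fin.ext hk'
      have hcond : ¬ ((k : ℕ) ≤ (i : ℕ) ∧ (i : ℕ) + 1 < m) := by
        rintro ⟨h1, h2⟩
        have := i.isLt
        omega
      have h0 : m - 1 - (k : ℕ) = 0 := by omega
      rw [if_neg hcond, h0, pow_zero, one_mul, add_zero]
      exact congrArg (fun j => N r m a i j) hkeq
  | succ t ih =>
      intro k hk
      have hj : (k : ℕ) + 1 < m := by omega
      rw [N_eq_of_lt r m a i k hj, ih ⟨(k : ℕ) + 1, hj⟩ (by simp only [Fin.val_mk]; omega)]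
      have h1 : m - 1 - ((k : ℕ) + 1) = t := by omega
      have h2 : m - 1 - (k : ℕ) = t + 1 := by omega
      simp only [Fin.val_mk, h1, h2]
      rw [mul_add, ← mul_assoc, ← pow_succ']
      have key : (if i = k then (1 : PowerSeries R) else 0)
          + X * (if (k : ℕ) + 1 ≤ (i : ℕ) ∧ (i : ℕ) + 1 < m
              then (X : PowerSeries R) ^ ((i : ℕ) - ((k : ℕ) + 1)) else 0)
          = (if (k : ℕ) ≤ (i : ℕ) ∧ (i : ℕ) + 1 < m
              then (X : PowerSeries R) ^ ((i : ℕ) - (k : ℕ)) else 0) := by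
        by_cases hik : i = k
        · subst hik
          have hA : ¬ ((i : ℕ) + 1 ≤ (i : ℕ) ∧ (i : ℕ) + 1 < m) := by omega
          rw [if_pos rfl, if_neg hA, mul_zero, add_zero,
            if_pos ⟨le_refl _, by omega⟩, Nat.sub_self, pow_zero]
        · have hik' : (i : ℕ) ≠ (k : ℕ) := fun h => hik (Fin.ext h)
          rw [if_neg hik, zero_add]
          by_cases hc : (k : ℕ) + 1 ≤ (i : ℕ) ∧ (i : ℕ) + 1 < m
          · rw [if_pos hc, if_pos ⟨by omega, hc.2⟩, ← pow_succ']
            congr 1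
            omega
          · rw [if_neg hc, if_neg (by omega), mul_zero]
      rw [← key]
      abel

end BCAux2

namespace BCAux3
open PowerSeries Finset BCAux BCAux2

variable {K : Type*} [Field K] (r m : ℕ) (a : ℕ → Matrix (Fin r) (Fin r) K)

local notation "R" => Matrix (Fin r) (Fin r) K

/-- the last index. -/
def lastI (hm : 1 ≤ m) : Fin m := ⟨m - 1, by omega⟩

lemma N_solve (hm : 1 ≤ m) (i k : Fin m) :
    N r m a i k = X ^ (m - 1 - (k : ℕ)) * N r m a i (lastI m hm)
      + (if (k : ℕ) ≤ (i : ℕ) ∧ (i : ℕ) + 1 < m then X ^ ((i : ℕ) - (k : ℕ)) else 0) :=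
  N_solve_aux r m a i (m - 1 - (k : ℕ)) k (by have := k.isLt; omega)

lemma Xpow_mul_C_eq (d : ℕ) (c : R) :
    (X : PowerSeries R) ^ d * C c = monomial d c := by
  apply PowerSeries.ext; intro n
  rw [PowerSeries.coeff_X_pow_mul', PowerSeries.coeff_monomial]
  by_cases h : d ≤ n
  · rw [if_pos h, PowerSeries.coeff_C]
    by_cases h2 : n = d
    · simp [h2]
    · rw [if_neg (by omega), if_neg h2]
  · rw [if_neg h, if_neg (by omega)]

/-- The series `G`. -/
noncomputable def Gs : PowerSeries R :=
  PowerSeries.mk (fun n => if n = 0 then 1 else if n ≤ m then a n else 0)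

lemma Gs_eq (hm : 1 ≤ m) :
    Gs r m a = 1 + ∑ k : Fin m, X ^ (m - (k : ℕ)) * C (a (m - (k : ℕ))) := by
  apply PowerSeries.ext; intro n
  rw [map_add, map_sum]
  simp only [Xpow_mul_C_eq, PowerSeries.coeff_monomial]
  rw [Fin.sum_univ_eq_sum_range (fun k => if n = m - k then a (m - k) else 0) m]
  rw [Gs, PowerSeries.coeff_mk, PowerSeries.coeff_one]
  by_cases h0 : n = 0
  · subst h0
    rw [if_pos rfl, if_pos rfl, Finset.sum_eq_zero, add_zero]
    intro k hk
    rw [Finset.mem_range] at hk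
    rw [if_neg (by omega)]
  · rw [if_neg h0, if_neg h0, zero_add]
    by_cases h1 : n ≤ m
    · rw [if_pos h1]
      rw [Finset.sum_eq_single (m - n)]
      · rw [if_pos (by omega), show m - (m - n) = n from by omega]
      · intro k hk hkn
        rw [Finset.mem_range] at hk
        rw [if_neg (by omega)]
      · intro h
        rw [Finset.mem_range] at h
        omega
    · rw [if_neg h1, Finset.sum_eq_zero]
      intro k hk
      rw [Finset.mem_range] at hk
      rw [if_neg (by omega)]

lemma F_G (hm : 1 ≤ m) (i : Fin m) :
    N r m a i (lastI m hm) * Gs r m a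
      = (if i = lastI m hm then 1 else 0)
        - X * ∑ k : Fin m,
            (if (k : ℕ) ≤ (i : ℕ) ∧ (i : ℕ) + 1 < m then (X : PowerSeries R) ^ ((i : ℕ) - (k : ℕ)) else 0)
              * C (a (m - (k : ℕ))) := by
  have hlast : ((lastI m hm : Fin m) : ℕ) + 1 = m := by
    simp only [lastI]
    omega
  have P2 := N_eq_last r m a i (lastI m hm) hlast
  -- rewrite each N i k via N_solve
  have expand : ∀ k : Fin m, N r m a i k * C (a (m - (k : ℕ)))
      = X ^ (m - 1 - (k : ℕ)) * (N r m a i (lastI m hm)) * C (a (m - (k : ℕ)))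
        + (if (k : ℕ) ≤ (i : ℕ) ∧ (i : ℕ) + 1 < m then (X:PowerSeries R) ^ ((i : ℕ) - (k : ℕ)) else 0)
            * C (a (m - (k : ℕ))) := by
    intro k
    rw [N_solve r m a hm i k, add_mul, mul_assoc]
  rw [Finset.sum_congr rfl (fun k _ => expand k)] at P2
  rw [Finset.sum_add_distrib, mul_add, sub_add_eq_sub_sub] at P2
  -- now move the F-part to the left
  have comm : X * ∑ k : Fin m, X ^ (m - 1 - (k : ℕ)) * N r m a i (lastI m hm) * C (a (m - (k : ℕ)))
      = N r m a i (lastI m hm) * ∑ k : Fin m, X ^ (m - (k : ℕ)) * C (a (m - (k : ℕ))) := by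
    rw [Finset.mul_sum, Finset.mul_sum]
    apply Finset.sum_congr rfl
    intro k _
    have hk := k.isLt
    have hx : (X : PowerSeries R) * X ^ (m - 1 - (k : ℕ)) = X ^ (m - (k : ℕ)) := by
      rw [← pow_succ']
      congr 1
      omega
    calc X * (X ^ (m - 1 - (k : ℕ)) * N r m a i (lastI m hm) * C (a (m - (k : ℕ))))
        = X * X ^ (m - 1 - (k : ℕ)) * N r m a i (lastI m hm) * C (a (m - (k : ℕ))) := by
          rw [← mul_assoc, ← mul_assoc]
      _ = X ^ (m - (k : ℕ)) * N r m a i (lastI m hm) * C (a (m - (k : ℕ))) := by rw [hx]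
      _ = N r m a i (lastI m hm) * X ^ (m - (k : ℕ)) * C (a (m - (k : ℕ))) := by
          rw [((commute_X (N r m a i (lastI m hm))).pow_right (m - (k : ℕ))).eq]
      _ = N r m a i (lastI m hm) * (X ^ (m - (k : ℕ)) * C (a (m - (k : ℕ)))) := by
          rw [mul_assoc]
  rw [eq_sub_iff_add_eq] at P2
  rw [Gs_eq r m a hm, mul_add, mul_one]
  rw [eq_sub_iff_add_eq]
  calc N r m a i (lastI m hm) + N r m a i (lastI m hm) * ∑ k : Fin m, X ^ (m - (k : ℕ)) * C (a (m - (k : ℕ)))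
        + X * ∑ k : Fin m, (if (k : ℕ) ≤ (i : ℕ) ∧ (i : ℕ) + 1 < m then (X:PowerSeries R) ^ ((i : ℕ) - (k : ℕ)) else 0) * C (a (m - (k : ℕ)))
      = N r m a i (lastI m hm) + X * ∑ k : Fin m, X ^ (m - 1 - (k : ℕ)) * N r m a i (lastI m hm) * C (a (m - (k : ℕ)))
        + X * ∑ k : Fin m, (if (k : ℕ) ≤ (i : ℕ) ∧ (i : ℕ) + 1 < m then (X:PowerSeries R) ^ ((i : ℕ) - (k : ℕ)) else 0) * C (a (m - (k : ℕ))) := by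
        rw [comm]
    _ = if i = lastI m hm then 1 else 0 := by
        rw [add_right_comm, P2, sub_add_cancel]

end BCAux3

namespace BCAux4
open PowerSeries Finset BCAux BCAux2 BCAux3

variable {K : Type*} [Field K] (r m : ℕ) (a : ℕ → Matrix (Fin r) (Fin r) K)

local notation "R" => Matrix (Fin r) (Fin r) K

/-- trace series -/
noncomputable def Cs : PowerSeries R :=
  PowerSeries.mk (fun n => ∑ i : Fin m, (blockCompanion r m a ^ (n + 1)) i i)

/-- derivative series -/
noncomputable def Ds : PowerSeries R :=
  PowerSeries.mk (fun n => if n + 1 ≤ m then (n + 1) • a (n + 1) else 0)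

lemma X_cancel (f g : PowerSeries R) (h : X * f = X * g) : f = g := by
  apply PowerSeries.ext; intro n
  have := congrArg (PowerSeries.coeff (n + 1)) h
  simpa [coeff_succ_X_mul] using this

lemma sumdiag : ∑ i : Fin m, N r m a i i = (m : ℕ) • (1 : PowerSeries R) + X * Cs r m a := by
  apply PowerSeries.ext; intro n
  rw [map_sum, map_add, map_nsmul]
  cases n with
  | zero =>
      rw [coeff_zero_X_mul, add_zero, PowerSeries.coeff_one, if_pos rfl]
      rw [Finset.sum_congr rfl (fun i _ => by rw [coeff_N, pow_zero, Matrix.one_apply_eq])]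
      rw [Finset.sum_const, card_univ, Fintype.card_fin]
  | succ p =>
      rw [coeff_succ_X_mul, PowerSeries.coeff_one, if_neg (Nat.succ_ne_zero p), smul_zero,
        zero_add, Cs, PowerSeries.coeff_mk]
      apply Finset.sum_congr rfl
      intro i _
      rw [coeff_N]

lemma sumEii (hm : 1 ≤ m) :
    ∑ i : Fin m, (if (i : ℕ) + 1 < m then (1 : PowerSeries R) else 0)
      = (m : ℕ) • (1 : PowerSeries R) - 1 := by
  have hterm : ∀ i : Fin m, (if (i : ℕ) + 1 < m then (1 : PowerSeries R) else 0)
      = 1 - (if i = lastI m hm then 1 else 0) := by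
    intro i
    by_cases h : i = lastI m hm
    · have hv : (i : ℕ) = m - 1 := by rw [h]; rfl
      rw [if_pos h, if_neg (by omega), sub_self]
    · have hv : (i : ℕ) ≠ m - 1 := by
        intro hc
        exact h (Fin.ext hc)
      have := i.isLt
      rw [if_pos (by omega), if_neg h, sub_zero]
  rw [Finset.sum_congr rfl (fun i _ => hterm i), Finset.sum_sub_distrib,
    Finset.sum_const, card_univ, Fintype.card_fin,
    Finset.sum_ite_eq' Finset.univ (lastI m hm) (fun _ => (1 : PowerSeries R)),
    if_pos (Finset.mem_univ _)]

lemma TF (hm : 1 ≤ m) :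
    ∑ i : Fin m, X ^ (m - 1 - (i : ℕ)) * N r m a i (lastI m hm)
      = 1 + X * Cs r m a := by
  have h3 : ∑ i : Fin m, N r m a i i
      = ∑ i : Fin m, X ^ (m - 1 - (i : ℕ)) * N r m a i (lastI m hm)
        + ((m : ℕ) • (1 : PowerSeries R) - 1) := by
    rw [← sumEii r m hm, ← Finset.sum_add_distrib]
    apply Finset.sum_congr rfl
    intro i _
    rw [N_solve r m a hm i i]
    congr 1
    have hc : ((i : ℕ) ≤ (i : ℕ) ∧ (i : ℕ) + 1 < m) ↔ ((i : ℕ) + 1 < m) :=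
      and_iff_right (le_refl _)
    rw [if_congr hc rfl rfl]
    by_cases h : (i : ℕ) + 1 < m
    · rw [if_pos h, if_pos h, Nat.sub_self, pow_zero]
    · rw [if_neg h, if_neg h]
  have h4 := sumdiag r m a
  rw [h3] at h4
  have h5 := congrArg (fun z => z - ((m : ℕ) • (1 : PowerSeries R) - 1)) h4
  rw [add_sub_cancel_right] at h5
  rw [h5]
  abel

lemma key_count (hm : 1 ≤ m) :
    (1 : PowerSeries R) - ∑ i : Fin m, ∑ k : Fin m,
        (if (k : ℕ) ≤ (i : ℕ) ∧ (i : ℕ) + 1 < m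
          then monomial (m - (k : ℕ)) (a (m - (k : ℕ))) else 0)
      = Gs r m a - X * Ds r m a := by
  apply PowerSeries.ext; intro n
  rw [map_sub, map_sub, map_sum]
  have hcoe : ∀ i : Fin m, (PowerSeries.coeff n) (∑ k : Fin m,
      (if (k : ℕ) ≤ (i : ℕ) ∧ (i : ℕ) + 1 < m
        then monomial (m - (k : ℕ)) (a (m - (k : ℕ))) else 0))
      = ∑ k ∈ Finset.range m, (if (k : ℕ) ≤ (i : ℕ) ∧ (i : ℕ) + 1 < m ∧ n = m - k
          then a (m - k) else 0) := by
    intro i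
    rw [map_sum]
    rw [Fin.sum_univ_eq_sum_range (fun k => (PowerSeries.coeff n)
      (if k ≤ (i : ℕ) ∧ (i : ℕ) + 1 < m then monomial (m - k) (a (m - k)) else 0)) m]
    apply Finset.sum_congr rfl
    intro k _
    by_cases h : k ≤ (i : ℕ) ∧ (i : ℕ) + 1 < m
    · rw [if_pos h, PowerSeries.coeff_monomial]
      by_cases h2 : n = m - k
      · rw [if_pos h2, if_pos ⟨h.1, h.2, h2⟩]
      · rw [if_neg h2, if_neg (by tauto)]
    · rw [if_neg h, map_zero, if_neg (by tauto)]
  rw [Finset.sum_congr rfl (fun i _ => hcoe i)]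
  rw [Fin.sum_univ_eq_sum_range (fun i => ∑ k ∈ Finset.range m,
      (if k ≤ i ∧ i + 1 < m ∧ n = m - k then a (m - k) else 0)) m]
  rw [Finset.sum_comm]
  cases n with
  | zero =>
      rw [Finset.sum_eq_zero, sub_zero, coeff_zero_X_mul, sub_zero]
      · rw [PowerSeries.coeff_one, if_pos rfl, Gs, PowerSeries.coeff_mk, if_pos rfl]
      · intro k hk
        rw [Finset.mem_range] at hk
        apply Finset.sum_eq_zero
        intro i _
        rw [if_neg (by omega)]
  | succ p =>
      rw [coeff_succ_X_mul, Ds, PowerSeries.coeff_mk]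
      have hg : (PowerSeries.coeff (p + 1)) (Gs r m a)
          = if p + 1 ≤ m then a (p + 1) else 0 := by
        rw [Gs, PowerSeries.coeff_mk, if_neg (Nat.succ_ne_zero p)]
      rw [hg, PowerSeries.coeff_one, if_neg (Nat.succ_ne_zero p)]
      by_cases h1 : p + 1 ≤ m
      · rw [if_pos h1, if_pos h1]
        rw [Finset.sum_eq_single (m - (p + 1))]
        · have hrw : ∀ i ∈ Finset.range m,
              (if m - (p + 1) ≤ i ∧ i + 1 < m ∧ p + 1 = m - (m - (p + 1)) then a (m - (m - (p + 1))) else 0)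
              = (if m - (p + 1) ≤ i ∧ i + 1 < m then a (p + 1) else 0) := by
            intro i _
            have e : m - (m - (p + 1)) = p + 1 := by omega
            rw [e]
            by_cases hc : m - (p + 1) ≤ i ∧ i + 1 < m
            · rw [if_pos ⟨hc.1, hc.2, rfl⟩, if_pos hc]
            · rw [if_neg (by tauto), if_neg hc]
          rw [Finset.sum_congr rfl hrw, ← Finset.sum_filter]
          have hfil : (Finset.range m).filter (fun i => m - (p + 1) ≤ i ∧ i + 1 < m)
              = Finset.Ico (m - (p + 1)) (m - 1) := by
            ext i
            simp only [Finset.mem_filter, Finset.mem_range, Finset.mem_Ico]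
            omega
          rw [hfil, Finset.sum_const, Nat.card_Ico]
          have e2 : m - 1 - (m - (p + 1)) = p := by omega
          rw [e2, zero_sub, succ_nsmul]
          abel
        · intro k hk hk2
          rw [Finset.mem_range] at hk
          apply Finset.sum_eq_zero
          intro i _
          rw [if_neg (by omega)]
        · intro hmem
          rw [Finset.mem_range] at hmem
          apply Finset.sum_eq_zero
          intro i _
          rw [if_neg (by omega)]
      · rw [if_neg h1, if_neg h1, sub_zero, zero_sub, Finset.sum_eq_zero, neg_zero]
        intro k hk
        rw [Finset.mem_range] at hk
        apply Finset.sum_eq_zero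
        intro i _
        rw [if_neg (by omega)]

end BCAux4

namespace BCAux5
open PowerSeries Finset BCAux BCAux2 BCAux3 BCAux4

variable {K : Type*} [Field K] (r m : ℕ) (a : ℕ → Matrix (Fin r) (Fin r) K)

local notation "R" => Matrix (Fin r) (Fin r) K

lemma star (hm : 1 ≤ m) :
    ∑ i : Fin m, X ^ (m - 1 - (i : ℕ)) * (N r m a i (lastI m hm) * Gs r m a)
      = Gs r m a - X * Ds r m a := by
  have hterm : ∀ i : Fin m, X ^ (m - 1 - (i : ℕ)) * (N r m a i (lastI m hm) * Gs r m a)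
      = (if i = lastI m hm then X ^ (m - 1 - (i : ℕ)) else 0)
        - ∑ k : Fin m, (if (k : ℕ) ≤ (i : ℕ) ∧ (i : ℕ) + 1 < m
            then monomial (m - (k : ℕ)) (a (m - (k : ℕ))) else 0) := by
    intro i
    rw [F_G r m a hm i, mul_sub]
    congr 1
    · by_cases h : i = lastI m hm
      · rw [if_pos h, if_pos h, mul_one]
      · rw [if_neg h, if_neg h, mul_zero]
    · rw [Finset.mul_sum, Finset.mul_sum]
      apply Finset.sum_congr rfl
      intro k _
      by_cases hc : (k : ℕ) ≤ (i : ℕ) ∧ (i : ℕ) + 1 < m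
      · rw [if_pos hc, if_pos hc, ← Xpow_mul_C_eq]
        have hik := i.isLt
        rw [← mul_assoc, ← mul_assoc, ← pow_succ, ← pow_add,
          show m - 1 - (i : ℕ) + 1 + ((i : ℕ) - (k : ℕ)) = m - (k : ℕ) from by omega]
      · rw [if_neg hc, if_neg hc, zero_mul, mul_zero, mul_zero]
  rw [Finset.sum_congr rfl (fun i _ => hterm i), Finset.sum_sub_distrib,
    Finset.sum_ite_eq' Finset.univ (lastI m hm) (fun i => (X : PowerSeries R) ^ (m - 1 - (i : ℕ))),
    if_pos (Finset.mem_univ _)]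
  have hone : (X : PowerSeries R) ^ (m - 1 - ((lastI m hm : Fin m) : ℕ)) = 1 := by
    rw [show m - 1 - ((lastI m hm : Fin m) : ℕ) = 0 from by simp [lastI], pow_zero]
  rw [hone, key_count r m a hm]

lemma main (hm : 1 ≤ m) : -(Cs r m a * Gs r m a) = Ds r m a := by
  have h1 : (1 + X * Cs r m a) * Gs r m a = Gs r m a - X * Ds r m a := by
    rw [← TF r m a hm, Finset.sum_mul,
      Finset.sum_congr rfl (fun (i : Fin m) _ => mul_assoc ((X : PowerSeries R) ^ (m - 1 - (i : ℕ)))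
        (N r m a i (lastI m hm)) (Gs r m a))]
    exact star r m a hm
  rw [add_mul, one_mul, mul_assoc] at h1
  have h2 : X * (Cs r m a * Gs r m a) = X * (-Ds r m a) := by
    calc X * (Cs r m a * Gs r m a)
        = (Gs r m a + X * (Cs r m a * Gs r m a)) - Gs r m a := by abel
      _ = (Gs r m a - X * Ds r m a) - Gs r m a := by rw [h1]
      _ = X * (-Ds r m a) := by rw [mul_neg]; abel
  have h3 := X_cancel r (Cs r m a * Gs r m a) (-Ds r m a) h2
  rw [h3, neg_neg]

end BCAux5

/-- **Generating series identity for block traces of companion powers.**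
With `c_p := Tr(M^p)` (naive block trace) and `G(z) = 1 + a_1 z + ⋯ + a_m z^m`, one has
`−(c_1 + c_2 z + c_3 z² + ⋯)·G(z) = G'(z) = a_1 + 2 a_2 z + ⋯ + m a_m z^(m-1)`
in the formal power series ring `M_r(K)[[z]]`. -/
theorem statement2 {K : Type*} [Field K] [CharZero K] (r m : ℕ) (hr : 1 ≤ r) (hm : 1 ≤ m)
    (a : ℕ → Matrix (Fin r) (Fin r) K) :
    -(PowerSeries.mk (fun n => ∑ i : Fin m, (blockCompanion r m a ^ (n + 1)) i i) *
        PowerSeries.mk (fun n => if n = 0 then 1 else if n ≤ m then a n else 0)) =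
      PowerSeries.mk (fun n => if n + 1 ≤ m then (n + 1) • a (n + 1) else 0) :=
  BCAux5.main r m a hm
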